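/- Let V be a finite-dimensional complex inner product space, let F be a linear operator on V, and let r > 0 be such that Re ⟪φ, F φ⟫ ≥ r ‖φ‖² for every φ ∈ V. Then for every α ∈ (0, 2π) the operator F − i·cot(α/2)·1 is invertible, and for every vector ψ ∈ V, ∫_{(0,2π)} ⟪ψ, (F − i·cot(α/2)·1)^{-1} ψ⟫ dα = 2π · ⟪ψ, (F + 1)^{-1} ψ⟫. -/

import Mathlib

open MeasureTheory Complex Metric Set

namespace Stmt9Aux

variable {V : Type*} [NormedAddCommGroup V] [InnerProductSpace ℂ V] [FiniteDimensional ℂ V]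

lemma inner_re_lb (F : V →L[ℂ] V) {r : ℝ}
    (hF : ∀ φ : V, r * ‖φ‖ ^ 2 ≤ ((inner ℂ φ (F φ) : ℂ)).re)
    {z : ℂ} (hz : z.re ≤ 0) (φ : V) :
    r * ‖φ‖ ^ 2 ≤ ((inner ℂ φ ((F - z • (1 : V →L[ℂ] V)) φ) : ℂ)).re := by
  have h1 : ((F - z • (1 : V →L[ℂ] V)) φ) = F φ - z • φ := by
    simp [ContinuousLinearMap.sub_apply]
  have h2 : (z * (inner ℂ φ φ : ℂ)).re = z.re * ‖φ‖ ^ 2 := by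
    have h3 : (inner ℂ φ φ : ℂ) = ((‖φ‖ ^ 2 : ℝ) : ℂ) := by
      rw [inner_self_eq_norm_sq_to_K]; norm_num
    rw [h3, Complex.mul_re, Complex.ofReal_re, Complex.ofReal_im]; ring
  rw [h1, inner_sub_right, inner_smul_right, Complex.sub_re, h2]
  nlinarith [hF φ, sq_nonneg ‖φ‖, mul_nonpos_of_nonpos_of_nonneg hz (sq_nonneg ‖φ‖)]

lemma norm_lb (F : V →L[ℂ] V) {r : ℝ}
    (hF : ∀ φ : V, r * ‖φ‖ ^ 2 ≤ ((inner ℂ φ (F φ) : ℂ)).re)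
    {z : ℂ} (hz : z.re ≤ 0) (φ : V) :
    r * ‖φ‖ ≤ ‖(F - z • (1 : V →L[ℂ] V)) φ‖ := by
  rcases eq_or_ne φ 0 with rfl | h
  · simp
  have h1 := inner_re_lb F hF hz φ
  have h2 : ((inner ℂ φ ((F - z • (1 : V →L[ℂ] V)) φ) : ℂ)).re
      ≤ ‖φ‖ * ‖(F - z • (1 : V →L[ℂ] V)) φ‖ := by
    refine (Complex.re_le_norm _).trans ?_
    exact norm_inner_le_norm _ _
  have hφ : 0 < ‖φ‖ := norm_pos_iff.mpr h
  nlinarith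

lemma isUnit_shift (F : V →L[ℂ] V) {r : ℝ} (hr : 0 < r)
    (hF : ∀ φ : V, r * ‖φ‖ ^ 2 ≤ ((inner ℂ φ (F φ) : ℂ)).re)
    {z : ℂ} (hz : z.re ≤ 0) :
    IsUnit (F - z • (1 : V →L[ℂ] V)) := by
  haveI : CompleteSpace V := FiniteDimensional.complete ℂ V
  rw [ContinuousLinearMap.isUnit_iff_bijective]
  have hinj : Function.Injective (F - z • (1 : V →L[ℂ] V)) := by
    intro a b hab
    have h0 : (F - z • (1 : V →L[ℂ] V)) (a - b) = 0 := by
      rw [map_sub, hab, sub_self]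
    have h1 := norm_lb F hF hz (a - b)
    rw [h0, norm_zero] at h1
    have h2 : ‖a - b‖ = 0 := le_antisymm (by nlinarith [norm_nonneg (a - b)]) (norm_nonneg _)
    exact sub_eq_zero.mp (by simpa using h2)
  exact ⟨hinj, LinearMap.injective_iff_surjective.mp hinj⟩

lemma inv_apply_eq (F : V →L[ℂ] V) {r : ℝ} (hr : 0 < r)
    (hF : ∀ φ : V, r * ‖φ‖ ^ 2 ≤ ((inner ℂ φ (F φ) : ℂ)).re)
    {z : ℂ} (hz : z.re ≤ 0) (ψ : V) :
    (F - z • (1 : V →L[ℂ] V)) ((Ring.inverse (F - z • (1 : V →L[ℂ] V))) ψ) = ψ := by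
  have h1 : (F - z • (1 : V →L[ℂ] V)) * Ring.inverse (F - z • (1 : V →L[ℂ] V)) = 1 :=
    Ring.mul_inverse_cancel _ (isUnit_shift F hr hF hz)
  calc (F - z • (1 : V →L[ℂ] V)) ((Ring.inverse (F - z • (1 : V →L[ℂ] V))) ψ)
      = ((F - z • (1 : V →L[ℂ] V)) * Ring.inverse (F - z • (1 : V →L[ℂ] V))) ψ := rfl
    _ = ψ := by rw [h1]; rfl

lemma inv_norm_le (F : V →L[ℂ] V) {r : ℝ} (hr : 0 < r)
    (hF : ∀ φ : V, r * ‖φ‖ ^ 2 ≤ ((inner ℂ φ (F φ) : ℂ)).re)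
    {z : ℂ} (hz : z.re ≤ 0) (ψ : V) :
    ‖(Ring.inverse (F - z • (1 : V →L[ℂ] V))) ψ‖ ≤ ‖ψ‖ / r := by
  have h1 := norm_lb F hF hz ((Ring.inverse (F - z • (1 : V →L[ℂ] V))) ψ)
  rw [inv_apply_eq F hr hF hz ψ] at h1
  rw [le_div_iff₀ hr]
  linarith [mul_comm r ‖(Ring.inverse (F - z • (1 : V →L[ℂ] V))) ψ‖]

lemma inner_inv_norm_le (F : V →L[ℂ] V) {r : ℝ} (hr : 0 < r)
    (hF : ∀ φ : V, r * ‖φ‖ ^ 2 ≤ ((inner ℂ φ (F φ) : ℂ)).re)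
    {z : ℂ} (hz : z.re ≤ 0) (ψ : V) :
    ‖(inner ℂ ψ ((Ring.inverse (F - z • (1 : V →L[ℂ] V))) ψ) : ℂ)‖ ≤ ‖ψ‖ * (‖ψ‖ / r) := by
  refine (norm_inner_le_norm _ _).trans ?_
  have := inv_norm_le F hr hF hz ψ
  have hψ := norm_nonneg ψ
  nlinarith

lemma re_moebius_nonpos {u : ℂ} (hu : ‖u‖ ≤ 1) : ((u + 1) / (u - 1)).re ≤ 0 := by
  rcases eq_or_ne u 1 with rfl | h
  · norm_num
  rw [Complex.div_re, ← add_div]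
  apply div_nonpos_of_nonpos_of_nonneg _ (Complex.normSq_nonneg _)
  have h1 : (u + 1).re * (u - 1).re + (u + 1).im * (u - 1).im = Complex.normSq u - 1 := by
    simp [Complex.normSq_apply, Complex.add_re, Complex.sub_re, Complex.add_im, Complex.sub_im]
    ring
  rw [h1]
  have h2 : Complex.normSq u = ‖u‖ ^ 2 := (Complex.sq_norm u).symm
  nlinarith [norm_nonneg u]

/-- The boundary function. -/
noncomputable def gf (F : V →L[ℂ] V) (ψ : V) (u : ℂ) : ℂ :=
  (inner ℂ ψ ((Ring.inverse (F - ((u + 1) / (u - 1)) • (1 : V →L[ℂ] V))) ψ) : ℂ)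

lemma gf_bound (F : V →L[ℂ] V) {r : ℝ} (hr : 0 < r)
    (hF : ∀ φ : V, r * ‖φ‖ ^ 2 ≤ ((inner ℂ φ (F φ) : ℂ)).re) (ψ : V)
    {u : ℂ} (hu : ‖u‖ ≤ 1) :
    ‖gf F ψ u‖ ≤ ‖ψ‖ * (‖ψ‖ / r) :=
  inner_inv_norm_le F hr hF (re_moebius_nonpos hu) ψ

lemma gf_diffOn (F : V →L[ℂ] V) {r : ℝ} (hr : 0 < r)
    (hF : ∀ φ : V, r * ‖φ‖ ^ 2 ≤ ((inner ℂ φ (F φ) : ℂ)).re) (ψ : V) :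
    DifferentiableOn ℂ (gf F ψ) (ball (0:ℂ) 1) := by
  haveI : CompleteSpace V := FiniteDimensional.complete ℂ V
  have hT : DifferentiableOn ℂ
      (fun u : ℂ => F - ((u + 1) / (u - 1)) • (1 : V →L[ℂ] V)) (ball (0:ℂ) 1) := by
    apply (differentiableOn_const F).sub
    apply DifferentiableOn.smul_const
    apply DifferentiableOn.div (by fun_prop) (by fun_prop)
    intro u hu
    rw [mem_ball_zero_iff] at hu
    intro hc
    rw [sub_eq_zero] at hc
    rw [hc] at hu
    simp at hu
  have hinv : DifferentiableOn ℂ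
      (fun u : ℂ => Ring.inverse (F - ((u + 1) / (u - 1)) • (1 : V →L[ℂ] V)))
      (ball (0:ℂ) 1) := by
    apply hT.inverse
    intro u hu
    rw [mem_ball_zero_iff] at hu
    exact isUnit_shift F hr hF
      (re_moebius_nonpos (by exact hu.le))
  have key : gf F ψ = fun u : ℂ =>
      ((innerSL ℂ ψ).comp (ContinuousLinearMap.apply ℂ V ψ))
        (Ring.inverse (F - ((u + 1) / (u - 1)) • (1 : V →L[ℂ] V))) := by
    ext u; simp [gf]
  rw [key]
  exact ((innerSL ℂ ψ).comp
    (ContinuousLinearMap.apply ℂ V ψ)).differentiable.comp_differentiableOn hinv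

lemma gf_contAt (F : V →L[ℂ] V) {r : ℝ} (hr : 0 < r)
    (hF : ∀ φ : V, r * ‖φ‖ ^ 2 ≤ ((inner ℂ φ (F φ) : ℂ)).re) (ψ : V)
    {u₀ : ℂ} (h1 : u₀ ≠ 1) (hu : ‖u₀‖ ≤ 1) :
    ContinuousAt (gf F ψ) u₀ := by
  haveI : CompleteSpace V := FiniteDimensional.complete ℂ V
  have hmobc : ContinuousAt (fun u : ℂ => (u + 1) / (u - 1)) u₀ :=
    ContinuousAt.div (by fun_prop) (by fun_prop) (sub_ne_zero.mpr h1)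
  have hTc : ContinuousAt (fun u : ℂ => F - ((u + 1) / (u - 1)) • (1 : V →L[ℂ] V)) u₀ :=
    continuousAt_const.sub (hmobc.smul continuousAt_const)
  have hu' : IsUnit (F - ((u₀ + 1) / (u₀ - 1)) • (1 : V →L[ℂ] V)) :=
    isUnit_shift F hr hF (re_moebius_nonpos hu)
  have hinvc : ContinuousAt Ring.inverse (F - ((u₀ + 1) / (u₀ - 1)) • (1 : V →L[ℂ] V)) := by
    have := NormedRing.inverse_continuousAt hu'.unit
    rwa [IsUnit.unit_spec] at this
  have key : gf F ψ = fun u : ℂ =>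
      ((innerSL ℂ ψ).comp (ContinuousLinearMap.apply ℂ V ψ))
        (Ring.inverse (F - ((u + 1) / (u - 1)) • (1 : V →L[ℂ] V))) := by
    ext u; simp [gf]
  have hcomp : ContinuousAt
      (fun u : ℂ => Ring.inverse (F - ((u + 1) / (u - 1)) • (1 : V →L[ℂ] V))) u₀ :=
    ContinuousAt.comp (x := u₀)
      (g := (Ring.inverse : (V →L[ℂ] V) → (V →L[ℂ] V)))
      (f := fun u : ℂ => F - ((u + 1) / (u - 1)) • (1 : V →L[ℂ] V)) hinvc hTc
  rw [key]
  exact (((innerSL ℂ ψ).comp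
    (ContinuousLinearMap.apply ℂ V ψ)).continuous.continuousAt).comp hcomp

lemma circle_avg (F : V →L[ℂ] V) {r : ℝ} (hr : 0 < r)
    (hF : ∀ φ : V, r * ‖φ‖ ^ 2 ≤ ((inner ℂ φ (F φ) : ℂ)).re) (ψ : V)
    {ρ : ℝ} (hρ : ρ ∈ Ioo (0:ℝ) 1) :
    ∫ θ in (0:ℝ)..(2 * Real.pi), gf F ψ (circleMap 0 ρ θ)
      = ((2 * Real.pi : ℝ) : ℂ) * gf F ψ 0 := by
  have hd : DiffContOnCl ℂ (gf F ψ) (ball (0:ℂ) ρ) := by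
    apply DifferentiableOn.diffContOnCl
    apply (gf_diffOn F hr hF ψ).mono
    rw [closure_ball (0:ℂ) (ne_of_gt hρ.1)]
    exact closedBall_subset_ball (by simpa using hρ.2)
  have h0 : (0:ℂ) ∈ ball (0:ℂ) ρ := by simpa using hρ.1
  have hcig := hd.circleIntegral_sub_inv_smul h0
  rw [circleIntegral] at hcig
  simp only [deriv_circleMap, sub_zero, smul_eq_mul] at hcig
  have key : EqOn (fun θ : ℝ => circleMap 0 ρ θ * I *
      ((circleMap 0 ρ θ)⁻¹ * gf F ψ (circleMap 0 ρ θ)))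
      (fun θ : ℝ => I * gf F ψ (circleMap 0 ρ θ)) (Set.uIcc (0:ℝ) (2 * Real.pi)) := by
    intro θ _
    have hne : circleMap 0 ρ θ ≠ 0 := circleMap_ne_center (ne_of_gt hρ.1)
    field_simp
  rw [intervalIntegral.integral_congr key, intervalIntegral.integral_const_mul] at hcig
  exact mul_left_cancel₀ Complex.I_ne_zero (hcig.trans (by push_cast; ring))

lemma exp_ne_one' {α : ℝ} (hα : α ∈ Ioo (0:ℝ) (2*Real.pi)) :
    Complex.exp (-(α:ℂ) * I) ≠ 1 := by
  intro hc
  rw [Complex.exp_eq_one_iff] at hc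
  obtain ⟨n, hn⟩ := hc
  have h2 : (-(α:ℂ)) = (n:ℂ) * 2 * Real.pi :=
    mul_right_cancel₀ Complex.I_ne_zero (by linear_combination hn)
  have h3 : (-α : ℝ) = (n:ℝ) * 2 * Real.pi := by exact_mod_cast h2
  rcases lt_or_ge n 0 with h | h
  · have hn1 : n ≤ -1 := by omega
    have : (n:ℝ) ≤ -1 := by exact_mod_cast hn1
    nlinarith [Real.pi_pos, hα.2]
  · have : (0:ℝ) ≤ (n:ℝ) := by exact_mod_cast h
    nlinarith [Real.pi_pos, hα.1]

lemma exp_I_ne_one {θ : ℝ} (hθ : θ ∈ Ioo (0:ℝ) (2*Real.pi)) :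
    Complex.exp ((θ:ℂ) * I) ≠ 1 := by
  intro hc
  rw [Complex.exp_eq_one_iff] at hc
  obtain ⟨n, hn⟩ := hc
  have h2 : ((θ:ℂ)) = (n:ℂ) * 2 * Real.pi :=
    mul_right_cancel₀ Complex.I_ne_zero (by linear_combination hn)
  have h3 : (θ : ℝ) = (n:ℝ) * 2 * Real.pi := by exact_mod_cast h2
  rcases lt_or_ge n 1 with h | h
  · have hn1 : n ≤ 0 := by omega
    have : (n:ℝ) ≤ 0 := by exact_mod_cast hn1
    nlinarith [Real.pi_pos, hθ.1]
  · have : (1:ℝ) ≤ (n:ℝ) := by exact_mod_cast h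
    nlinarith [Real.pi_pos, hθ.2]

lemma key_id {α : ℝ} (hα : α ∈ Ioo (0:ℝ) (2*Real.pi)) :
    (Complex.exp (-(α:ℂ) * I) + 1) / (Complex.exp (-(α:ℂ) * I) - 1)
      = I * ((Real.cot (α/2) : ℝ) : ℂ) := by
  have hden : Complex.exp (-(α:ℂ) * I) - 1 ≠ 0 := sub_ne_zero.mpr (exp_ne_one' hα)
  have hs : Real.sin (α/2) ≠ 0 := by
    have := Real.sin_pos_of_pos_of_lt_pi (x := α/2) (by linarith [hα.1]) (by linarith [hα.2])
    linarith
  have hcast : ((α/2 : ℝ) : ℂ) = (α:ℂ)/2 := by push_cast; ring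
  have hs' : Complex.sin ((α:ℂ)/2) ≠ 0 := by
    rw [← hcast, ← Complex.ofReal_sin]
    exact_mod_cast hs
  rw [Complex.ofReal_cot, hcast, Complex.cot_eq_cos_div_sin]
  rw [div_eq_iff hden]
  field_simp [hs']
  have hexp2 : Complex.exp (-((α:ℂ) * I)) = Complex.exp (-((α:ℂ)/2) * I) ^ 2 := by
    rw [← Complex.exp_nat_mul]
    ring_nf
  have hinv : Complex.exp (((α:ℂ)/2) * I) = (Complex.exp (-((α:ℂ)/2) * I))⁻¹ := by
    rw [← Complex.exp_neg]
    ring_nf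
  have hne : Complex.exp (-((α:ℂ)/2) * I) ≠ 0 := Complex.exp_ne_zero _
  rw [Complex.sin, Complex.cos, hexp2, hinv]
  field_simp
  ring

lemma boundary_avg (F : V →L[ℂ] V) {r : ℝ} (hr : 0 < r)
    (hF : ∀ φ : V, r * ‖φ‖ ^ 2 ≤ ((inner ℂ φ (F φ) : ℂ)).re) (ψ : V) :
    ∫ θ in Ioc (0:ℝ) (2 * Real.pi), gf F ψ (circleMap 0 1 θ)
      = ((2 * Real.pi : ℝ) : ℂ) * gf F ψ 0 := by
  have hπ : (0:ℝ) < 2 * Real.pi := by positivity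
  set l : Filter ℝ := nhdsWithin 1 (Ioo (0:ℝ) 1) with hl
  have hne : l.NeBot := by
    apply mem_closure_iff_nhdsWithin_neBot.mp
    rw [closure_Ioo (by norm_num : (0:ℝ) ≠ 1)]
    exact ⟨by norm_num, le_refl 1⟩
  have hmeas : ∀ᶠ ρ in l, AEStronglyMeasurable (fun θ : ℝ => gf F ψ (circleMap 0 ρ θ))
      (volume.restrict (Ioc (0:ℝ) (2 * Real.pi))) := by
    filter_upwards [self_mem_nhdsWithin] with ρ hρ
    have hcont : Continuous fun θ : ℝ => gf F ψ (circleMap 0 ρ θ) := by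
      apply ((gf_diffOn F hr hF ψ).continuousOn).comp_continuous (continuous_circleMap 0 ρ)
      intro θ
      rw [mem_ball_zero_iff, norm_circleMap_zero, abs_of_pos hρ.1]
      exact hρ.2
    exact hcont.aestronglyMeasurable
  have hbound : ∀ᶠ ρ in l, ∀ᵐ θ ∂(volume.restrict (Ioc (0:ℝ) (2 * Real.pi))),
      ‖gf F ψ (circleMap 0 ρ θ)‖ ≤ ‖ψ‖ * (‖ψ‖ / r) := by
    filter_upwards [self_mem_nhdsWithin] with ρ hρ
    apply Filter.Eventually.of_forall
    intro θ
    apply gf_bound F hr hF ψ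
    rw [norm_circleMap_zero, abs_of_pos hρ.1]
    exact hρ.2.le
  have hint : Integrable (fun _ : ℝ => ‖ψ‖ * (‖ψ‖ / r))
      (volume.restrict (Ioc (0:ℝ) (2 * Real.pi))) :=
    integrableOn_const measure_Ioc_lt_top.ne
  have hae : ∀ᵐ θ ∂(volume.restrict (Ioc (0:ℝ) (2 * Real.pi))), θ ∈ Ioo (0:ℝ) (2 * Real.pi) := by
    have h1 : ∀ᵐ θ ∂(volume.restrict (Ioc (0:ℝ) (2 * Real.pi))), θ ∈ Ioc (0:ℝ) (2 * Real.pi) :=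
      ae_restrict_mem measurableSet_Ioc
    have h2 : ∀ᵐ θ ∂(volume.restrict (Ioc (0:ℝ) (2 * Real.pi))), θ ≠ 2 * Real.pi := by
      refine ae_iff.mpr ?_
      have hset : {θ : ℝ | ¬ θ ≠ 2 * Real.pi} = {2 * Real.pi} := by ext x; simp
      rw [hset, Measure.restrict_apply (measurableSet_singleton _)]
      exact measure_mono_null inter_subset_left Real.volume_singleton
    filter_upwards [h1, h2] with θ hθ1 hθ2
    exact ⟨hθ1.1, lt_of_le_of_ne hθ1.2 hθ2⟩
  have hlim : ∀ᵐ θ ∂(volume.restrict (Ioc (0:ℝ) (2 * Real.pi))),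
      Filter.Tendsto (fun ρ : ℝ => gf F ψ (circleMap 0 ρ θ)) l
        (nhds (gf F ψ (circleMap 0 1 θ))) := by
    filter_upwards [hae] with θ hθ
    have hcmcont : Continuous (fun ρ : ℝ => circleMap 0 ρ θ) := by
      simp only [circleMap, zero_add]
      exact Complex.continuous_ofReal.mul continuous_const
    have hcm : Filter.Tendsto (fun ρ : ℝ => circleMap 0 ρ θ) l
        (nhds (circleMap 0 1 θ)) :=
      ((hcmcont.tendsto 1).mono_left nhdsWithin_le_nhds)
    have hne1 : circleMap 0 1 θ ≠ 1 := by
      rw [circleMap_zero]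
      push_cast
      rw [one_mul]
      exact exp_I_ne_one hθ
    have habs : ‖circleMap 0 1 θ‖ ≤ 1 := by
      rw [norm_circleMap_zero]; norm_num
    exact Filter.Tendsto.comp (g := gf F ψ) (f := fun ρ : ℝ => circleMap 0 ρ θ)
      (gf_contAt F hr hF ψ hne1 habs) hcm
  have hDCT := MeasureTheory.tendsto_integral_filter_of_dominated_convergence
    (μ := volume.restrict (Ioc (0:ℝ) (2 * Real.pi))) (l := l)
    (F := fun ρ θ => gf F ψ (circleMap 0 ρ θ))
    (f := fun θ => gf F ψ (circleMap 0 1 θ))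
    (bound := fun _ => ‖ψ‖ * (‖ψ‖ / r)) hmeas hbound hint hlim
  have hconst : ∀ᶠ ρ in l, (∫ θ in Ioc (0:ℝ) (2 * Real.pi), gf F ψ (circleMap 0 ρ θ))
      = ((2 * Real.pi : ℝ) : ℂ) * gf F ψ 0 := by
    filter_upwards [self_mem_nhdsWithin] with ρ hρ
    rw [← intervalIntegral.integral_of_le hπ.le]
    exact circle_avg F hr hF ψ hρ
  exact tendsto_nhds_unique hDCT ((Filter.tendsto_congr' hconst).mpr tendsto_const_nhds)

end Stmt9Aux

open Stmt9Aux

/-- For a strictly accretive operator `F` on a finite-dimensional complex inner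
product space, `F − i·cot(α/2)·1` is invertible for `α ∈ (0,2π)` and
`∫_{(0,2π)} ⟪ψ, (F − i·cot(α/2))⁻¹ ψ⟫ dα = 2π ⟪ψ, (F+1)⁻¹ ψ⟫`. -/
theorem stmt_9 {V : Type*} [NormedAddCommGroup V] [InnerProductSpace ℂ V]
    [FiniteDimensional ℂ V]
    (F : V →L[ℂ] V) (r : ℝ) (hr : 0 < r)
    (hF : ∀ φ : V, r * ‖φ‖ ^ 2 ≤ ((inner ℂ φ (F φ) : ℂ)).re) :
    (∀ α ∈ Set.Ioo (0 : ℝ) (2 * Real.pi),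
      IsUnit (F - (Complex.I * (Real.cot (α / 2) : ℂ)) • (1 : V →L[ℂ] V))) ∧
    ∀ ψ : V,
      (∫ α in Set.Ioo (0 : ℝ) (2 * Real.pi),
          (inner ℂ ψ ((Ring.inverse
            (F - (Complex.I * (Real.cot (α / 2) : ℂ)) • (1 : V →L[ℂ] V))) ψ) : ℂ))
        = ((2 * Real.pi : ℝ) : ℂ) * (inner ℂ ψ ((Ring.inverse (F + 1)) ψ) : ℂ) := by
  constructor
  · intro α hα
    apply isUnit_shift F hr hF
    rw [Complex.mul_re, Complex.I_re, Complex.I_im, Complex.ofReal_im]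
    norm_num
  · intro ψ
    have hπ : (0:ℝ) < 2 * Real.pi := by positivity
    have hEq : EqOn
        (fun α : ℝ => (inner ℂ ψ ((Ring.inverse
            (F - (Complex.I * (Real.cot (α / 2) : ℂ)) • (1 : V →L[ℂ] V))) ψ) : ℂ))
        (fun α : ℝ => gf F ψ (circleMap 0 1 (2 * Real.pi - α)))
        (Ioo (0:ℝ) (2 * Real.pi)) := by
      intro α hα
      have hcm : circleMap 0 1 (2 * Real.pi - α) = Complex.exp (-(α:ℂ) * I) := by
        rw [circleMap_zero]
        push_cast
        rw [one_mul]
        rw [show ((2 * (Real.pi:ℂ) - (α:ℂ)) * I) = (-(α:ℂ)) * I + 2 * (Real.pi:ℂ) * I by ring]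
        rw [Complex.exp_add, Complex.exp_two_pi_mul_I, mul_one]
      simp only [gf, hcm]
      rw [key_id hα]
    rw [setIntegral_congr_fun measurableSet_Ioo hEq]
    have hrefl : (∫ α in Ioo (0:ℝ) (2 * Real.pi), gf F ψ (circleMap 0 1 (2 * Real.pi - α)))
        = ∫ θ in Ioo (0:ℝ) (2 * Real.pi), gf F ψ (circleMap 0 1 θ) := by
      rw [← integral_Ioc_eq_integral_Ioo, ← integral_Ioc_eq_integral_Ioo,
        ← intervalIntegral.integral_of_le hπ.le, ← intervalIntegral.integral_of_le hπ.le]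
      have := intervalIntegral.integral_comp_sub_left (a := (0:ℝ)) (b := 2 * Real.pi)
        (fun θ : ℝ => gf F ψ (circleMap 0 1 θ)) (2 * Real.pi)
      simpa using this
    rw [hrefl, ← integral_Ioc_eq_integral_Ioo, boundary_avg F hr hF ψ]
    congr 1
    have h0 : ((0:ℂ) + 1) / ((0:ℂ) - 1) = -1 := by norm_num
    rw [gf, h0]
    congr 2
    rw [neg_smul, one_smul, sub_neg_eq_add]
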